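/- Let K = F_q be a finite field with q elements and let n ≥ 4. Then c_3(n) = (q-1)^2 c_3(n-1) + 2q(q-1) c_3^{+-}(n-1) + q^2 c_3^{--}(n-1). -/

import Mathlib

open scoped Classical

noncomputable section

namespace FriezeCount

variable (K : Type) [Field K]

/-- A tame `SL_k`-frieze pattern of width `w` over `K`, encoded as a family
`e : ℤ → ℤ → K`, `(j, i) ↦ e_j(i)`, normalized to vanish for `j` outside
`{-(k-1), ..., n-1}` (where `n = w + k + 1`, so `n - 1 = w + k`):
the `k-1` bottom and top rows vanish, the rows `j = 0` and `j = w+1` consist of ones,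
all `k × k` diamonds have determinant `1` and all `(k+1) × (k+1)` diamonds have
determinant `0` (whenever all the entries involved are defined). -/
def IsTameFrieze (k w : ℕ) (e : ℤ → ℤ → K) : Prop :=
  (∀ j i : ℤ, j ≤ -1 → e j i = 0) ∧
  (∀ j i : ℤ, (w : ℤ) + 2 ≤ j → e j i = 0) ∧
  (∀ i : ℤ, e 0 i = 1) ∧
  (∀ i : ℤ, e ((w : ℤ) + 1) i = 1) ∧
  (∀ i j : ℤ, -((k : ℤ) - 1) ≤ j - ((k : ℤ) - 1) → j + ((k : ℤ) - 1) ≤ (w : ℤ) + (k : ℤ) →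
    (Matrix.of fun r c : Fin k =>
      e (j + ((c : ℕ) : ℤ) - ((r : ℕ) : ℤ)) (i + ((r : ℕ) : ℤ))).det = 1) ∧
  (∀ i j : ℤ, -((k : ℤ) - 1) ≤ j - (k : ℤ) → j + (k : ℤ) ≤ (w : ℤ) + (k : ℤ) →
    (Matrix.of fun r c : Fin (k + 1) =>
      e (j + ((c : ℕ) : ℤ) - ((r : ℕ) : ℤ)) (i + ((r : ℕ) : ℤ))).det = 0)

/-- The set `C_k(n)` of cyclic `n`-tuples of points in `ℙ^{k-1}(K)` such that any `k`
cyclically consecutive points are projectively independent. -/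
def Ccal (k n : ℕ) : Set (ZMod n → Projectivization K (Fin k → K)) :=
  {v | ∀ i : ZMod n,
    Projectivization.Independent fun t : Fin k => v (i + ((t : ℕ) : ZMod n))}

/-- `V` is a lift of the tuple `v` of projective points. -/
def IsLift (k n : ℕ) (v : ZMod n → Projectivization K (Fin k → K))
    (V : ZMod n → Fin k → K) : Prop :=
  ∀ i, ∃ h : V i ≠ 0, Projectivization.mk K (V i) h = v i

/-- `d_i = det(V_i, ..., V_{i+k-1})`, indices mod `n`. -/
def cycDet (k n : ℕ) (V : ZMod n → Fin k → K) (i : ZMod n) : K :=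
  (Matrix.of fun r c : Fin k => V (i + ((r : ℕ) : ZMod n)) c).det

/-- The set `C_k^*(n)`: tuples of `C_k(n)` satisfying, for any lift and for each
`i ∈ {1, ..., g-1}` (`g = gcd(k,n)`), the relation
`d_i d_{i+g} ⋯ d_{i+n-g} = d_{i+1} d_{i+g+1} ⋯ d_{i+n-g+1}`.
(When `g = 1` the condition is vacuous and this set is `C_k(n)`.) -/
def CstarSet (k n : ℕ) : Set (ZMod n → Projectivization K (Fin k → K)) :=
  {v | v ∈ Ccal K k n ∧ ∀ V : ZMod n → Fin k → K, IsLift K k n v V →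
    ∀ i ∈ Finset.Icc 1 (Nat.gcd k n - 1),
      (∏ s ∈ Finset.range (n / Nat.gcd k n),
        cycDet K k n V (((i + s * Nat.gcd k n : ℕ)) : ZMod n)) =
      ∏ s ∈ Finset.range (n / Nat.gcd k n),
        cycDet K k n V (((i + 1 + s * Nat.gcd k n : ℕ)) : ZMod n)}

/-- The (anti-periodically) extended lift: `Ṽ_m = V_m` for `1 ≤ m ≤ n` and
`Ṽ_{n+i} = (-1)^{k-1} V_i` for `1 ≤ i ≤ k - 1`. -/
def signedExt (k n : ℕ) (V : ZMod n → Fin k → K) (m : ℕ) : Fin k → K :=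
  if m ≤ n then V ((m : ℕ) : ZMod n) else ((-1 : K) ^ (k - 1)) • V ((m : ℕ) : ZMod n)

/-- The lift `V` has constant consecutive determinants:
`det(Ṽ_i, ..., Ṽ_{i+k-1})` is the same for all `i = 1, ..., n`. -/
def HasConstConsecDets (k n : ℕ) (V : ZMod n → Fin k → K) : Prop :=
  ∀ i ∈ Finset.Icc 1 n, ∀ i' ∈ Finset.Icc 1 n,
    (Matrix.of fun (r : Fin k) (c : Fin k) => signedExt K k n V (i + (r : ℕ)) c).det =
    (Matrix.of fun (r : Fin k) (c : Fin k) => signedExt K k n V (i' + (r : ℕ)) c).det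

/-- The coefficient relation (basis expansion along the tuple):
`Ṽ_i = Σ_{j=1}^{k-1} (-1)^{j-1} a_{k-j, i+j-1} Ṽ_{i+j} + (-1)^{k-1} Ṽ_{i+k}` for `i ∈ [n]`,
where `Ṽ` is the signed extension of the lift `V` and `a_s` corresponds to `a ⟨s-1⟩`. -/
def CoeffRel (k n : ℕ) (V : ZMod n → Fin k → K)
    (a : Fin (k - 1) → ZMod n → K) : Prop :=
  ∀ i ∈ Finset.Icc 1 n,
    signedExt K k n V i =
      (∑ t : Fin (k - 1),
        ((-1 : K) ^ (t : ℕ) * a ⟨k - 2 - (t : ℕ), by have := t.isLt; omega⟩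
            (((i + (t : ℕ) : ℕ)) : ZMod n)) • signedExt K k n V (i + (t : ℕ) + 1))
      + ((-1 : K) ^ (k - 1)) • signedExt K k n V (i + k)

/-- The set `Coeff(v)` of coefficient matrices arising from lifts of `v` with
constant consecutive determinants. -/
def CoeffSet (k n : ℕ) (v : ZMod n → Projectivization K (Fin k → K)) :
    Set (Fin (k - 1) → ZMod n → K) :=
  {a | ∃ V : ZMod n → Fin k → K,
    IsLift K k n v V ∧ HasConstConsecDets K k n V ∧ CoeffRel K k n V a}

/-- Companion-type matrix `A_i` built from the coefficients `(a_{s,i})`: first row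
`(a_{k-1,i}, -a_{k-2,i+1}, ..., (-1)^{k-2} a_{1,i+k-2}, (-1)^{k-1})`, ones on the
subdiagonal, zeros elsewhere (`a_s` corresponds to `a ⟨s-1⟩`). -/
def companion (k n : ℕ) (a : Fin (k - 1) → ZMod n → K) (i : ZMod n) :
    Matrix (Fin k) (Fin k) K :=
  Matrix.of fun r c =>
    if (r : ℕ) = 0 then
      if h : (c : ℕ) < k - 1 then
        (-1 : K) ^ (c : ℕ) * a ⟨k - 2 - (c : ℕ), by omega⟩ (i + ((c : ℕ) : ZMod n))
      else (-1 : K) ^ (k - 1)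
    else if (r : ℕ) = (c : ℕ) + 1 then 1 else 0

/-- The ordered product `A_1 A_2 ⋯ A_n`. -/
def friezeProd (k n : ℕ) (a : Fin (k - 1) → ZMod n → K) : Matrix (Fin k) (Fin k) K :=
  ((List.range n).map fun i => companion K k n a (((i + 1 : ℕ)) : ZMod n)).prod

/-- The entries `e` satisfy the recursion with coefficients `(a_{s,i})`:
`e_j(i) = Σ_{t=0}^{k-2} (-1)^t a_{k-1-t, i+t} e_{j-t-1}(i+t+1) + (-1)^{k-1} e_{j-k}(i+k)`
for all `i ∈ ℤ` and all `j` with `0 ≤ j ≤ n-1` for which all the entries involved are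
defined (i.e. `1 ≤ j ≤ n-1`); `a_s` corresponds to `a ⟨s-1⟩`, second index mod `n`. -/
def SatisfiesRecursion (k n : ℕ) (e : ℤ → ℤ → K)
    (a : Fin (k - 1) → ZMod n → K) : Prop :=
  ∀ i j : ℤ, 1 ≤ j → j ≤ (n : ℤ) - 1 →
    e j i =
      (∑ t : Fin (k - 1),
        (-1 : K) ^ (t : ℕ) * a ⟨k - 2 - (t : ℕ), by have := t.isLt; omega⟩
            ((i + (t : ℕ) : ℤ) : ZMod n) * e (j - (t : ℕ) - 1) (i + (t : ℕ) + 1))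
      + (-1 : K) ^ (k - 1) * e (j - (k : ℕ)) (i + (k : ℕ))

/-- The projective general linear group `PGL(k, K) = GL(k, K) / center`. -/
def PGL (k : ℕ) : Type _ :=
  GL (Fin k) K ⧸ Subgroup.center (GL (Fin k) K)

instance (k : ℕ) : Group (PGL K k) :=
  inferInstanceAs (Group (GL (Fin k) K ⧸ Subgroup.center (GL (Fin k) K)))

/-- The action of `A ∈ GL(k, K)` on the projective space `ℙ^{k-1}(K)`. -/
def glProj (k : ℕ) (A : GL (Fin k) K) :
    Projectivization K (Fin k → K) → Projectivization K (Fin k → K) :=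
  Projectivization.map
    ((LinearMap.GeneralLinearGroup.generalLinearEquiv K (Fin k → K)
        (Matrix.GeneralLinearGroup.toLin A)) : (Fin k → K) →ₗ[K] (Fin k → K))
    (LinearMap.GeneralLinearGroup.generalLinearEquiv K (Fin k → K)
        (Matrix.GeneralLinearGroup.toLin A)).injective

/-- The stabilizer of a tuple `v` of projective points under the (diagonal) action
of `PGL(k, K)`; since the center of `GL(k, K)` acts trivially on projective space,
this is the set of classes of matrices `A ∈ GL(k, K)` fixing each `v_i`. -/
def pglStab (k n : ℕ) (v : ZMod n → Projectivization K (Fin k → K)) :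
    Set (PGL K k) :=
  {g | ∃ A : GL (Fin k) K, (QuotientGroup.mk A : PGL K k) = g ∧
        ∀ i, glProj K k A (v i) = v i}

/-- `(U_1, ..., U_r)` is a decomposition with respect to the lift `V`:
the `U_j` are nonzero, `K^k = U_1 ⊕ ⋯ ⊕ U_r`, and every `V_i` lies in some `U_j`. -/
def IsDecompOfLift (k n : ℕ) (V : ZMod n → Fin k → K) {r : ℕ}
    (U : Fin r → Submodule K (Fin k → K)) : Prop :=
  (∀ j, U j ≠ ⊥) ∧ iSupIndep U ∧ (⨆ j, U j) = ⊤ ∧ ∀ i, ∃ j, V i ∈ U j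

/-- `(U_1, ..., U_r)` is a decomposition of the tuple `v` of projective points
(this does not depend on the choice of the lift). -/
def IsDecompOf (k n : ℕ) (v : ZMod n → Projectivization K (Fin k → K)) {r : ℕ}
    (U : Fin r → Submodule K (Fin k → K)) : Prop :=
  ∀ V : ZMod n → Fin k → K, IsLift K k n v V → IsDecompOfLift K k n V U

/-- A decomposition is maximal if no member `U_j` can be split as a direct sum
`U_j = W₁ ⊕ W₂` of nonzero subspaces in such a way that replacing `U_j` by
`W₁, W₂` again yields a decomposition of `v`. -/
def IsMaxDecompOf (k n : ℕ) (v : ZMod n → Projectivization K (Fin k → K)) {r : ℕ}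
    (U : Fin r → Submodule K (Fin k → K)) : Prop :=
  IsDecompOf K k n v U ∧
    ∀ (j : Fin r) (W₁ W₂ : Submodule K (Fin k → K)), W₁ ≠ ⊥ → W₂ ≠ ⊥ →
      Disjoint W₁ W₂ → W₁ ⊔ W₂ = U j →
      ¬ ∀ (V : ZMod n → Fin k → K), IsLift K k n v V →
        ∀ i, (∃ l, l ≠ j ∧ V i ∈ U l) ∨ V i ∈ W₁ ∨ V i ∈ W₂

/-- The triple `{v_i, v_{i+1}, v_{i+2}}` (indices mod `n`) is projectively independent. -/
def tripleIndep (n : ℕ) (v : ZMod n → Projectivization K (Fin 3 → K)) (i : ℕ) : Prop :=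
  Projectivization.Independent fun t : Fin 3 => v (((i + (t : ℕ) : ℕ)) : ZMod n)

/-- The set `C_3^{s₁ s₂}(n)`; `s₁ s₂ : Bool`, with `true` standing for `+`:
tuples with `v_n ≠ v_1` such that the triple at `i` is independent exactly for
`i ∈ I_{s₁,s₂} = {1,...,n-2} ∪ {n-1 if s₁ = +} ∪ {n if s₂ = +}`. -/
def C3s (n : ℕ) (s₁ s₂ : Bool) : Set (ZMod n → Projectivization K (Fin 3 → K)) :=
  {v | v ((n : ℕ) : ZMod n) ≠ v ((1 : ℕ) : ZMod n) ∧
    (∀ i : ℕ, 1 ≤ i → i ≤ n - 2 → tripleIndep K n v i) ∧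
    (tripleIndep K n v (n - 1) ↔ s₁ = true) ∧
    (tripleIndep K n v n ↔ s₂ = true)}

section Counting
set_option linter.unusedSectionVars false
variable [Fintype K]

abbrev V3 := Fin 3 → K
abbrev PT := Projectivization K (V3 K)

def Lset (W : Submodule K (V3 K)) : Set (PT K) := {p | p.submodule ≤ W}

lemma submodule_le_iff_rep_mem (p : PT K) (W : Submodule K (V3 K)) :
    p.submodule ≤ W ↔ p.rep ∈ W := by
  rw [Projectivization.submodule_eq, Submodule.span_singleton_le_iff_mem]

lemma mk_unit_smul (u : Kˣ) (x : V3 K) (hx : x ≠ 0) :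
    Projectivization.mk K ((u : K) • x) (smul_ne_zero (Units.ne_zero u) hx)
      = Projectivization.mk K x hx :=
  (Projectivization.mk_eq_mk_iff K _ _ _ hx).2 ⟨u, rfl⟩

lemma card_Lset_mul (W : Submodule K (V3 K)) :
    Nat.card (Lset K W) * (Fintype.card K - 1) = Fintype.card K ^ (Module.finrank K W) - 1 := by
  classical
  have e : {x : V3 K // x ∈ W ∧ x ≠ 0} ≃ (Lset K W) × Kˣ := by
    refine Equiv.symm (Equiv.ofBijective (fun pu => ⟨(pu.2 : K) • pu.1.1.rep, ?_, ?_⟩) ⟨?_, ?_⟩)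
    · exact Submodule.smul_mem _ _ (((submodule_le_iff_rep_mem K _ _).1 pu.1.2))
    · exact smul_ne_zero (Units.ne_zero _) (Projectivization.rep_nonzero _)
    · rintro ⟨⟨p, hp⟩, u⟩ ⟨⟨p', hp'⟩, u'⟩ h
      simp only [Subtype.mk_eq_mk] at h
      have hrep : (↑(u⁻¹ * u') : K) • p'.rep = p.rep := by
        have : ((u : K)⁻¹ * (u' : K)) • p'.rep = (u:K)⁻¹ • ((u':K) • p'.rep) := by
          rw [mul_smul]
        rw [Units.val_mul, Units.val_inv_eq_inv_val, this, ← h, ← mul_smul,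
          inv_mul_cancel₀ (Units.ne_zero u), one_smul]
      have hpp : p = p' := by
        conv_lhs => rw [← Projectivization.mk_rep p]
        conv_rhs => rw [← Projectivization.mk_rep p']
        exact (Projectivization.mk_eq_mk_iff K _ _ _ _).2 ⟨u⁻¹ * u', hrep⟩
      subst hpp
      have huu : u = u' := by
        have h0 := h
        have : ((u : K) - (u' : K)) • p.rep = 0 := by
          rw [sub_smul, h0, sub_self]
        rcases smul_eq_zero.1 this with h1 | h2
        · exact Units.ext (by linear_combination h1)
        · exact absurd h2 (Projectivization.rep_nonzero p)
      simp [huu]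
    · rintro ⟨x, hxW, hx⟩
      have hsub : (Projectivization.mk K x hx).submodule ≤ W := by
        rw [Projectivization.submodule_mk, Submodule.span_singleton_le_iff_mem]; exact hxW
      have hmk : Projectivization.mk K (Projectivization.mk K x hx).rep
          (Projectivization.rep_nonzero _) = Projectivization.mk K x hx :=
        Projectivization.mk_rep _
      obtain ⟨a, ha⟩ := (Projectivization.mk_eq_mk_iff K _ _ _ hx).1 hmk
      refine ⟨⟨⟨Projectivization.mk K x hx, hsub⟩, a⁻¹⟩, ?_⟩
      simp only [Subtype.mk_eq_mk]
      have : (↑a⁻¹ : K) • (a : K) • x = x := by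
        rw [← mul_smul, Units.val_inv_eq_inv_val, inv_mul_cancel₀ (Units.ne_zero a), one_smul]
      rw [← ha, Units.smul_def]
      exact this
  have h1 : Nat.card {x : V3 K // x ∈ W ∧ x ≠ 0} = Fintype.card K ^ (Module.finrank K W) - 1 := by
    have e2 : {x : V3 K // x ∈ W ∧ x ≠ 0} ≃ {y : W // ¬ (y = 0)} :=
      { toFun := fun x => ⟨⟨x.1, x.2.1⟩, fun hc => x.2.2 (by simpa [Submodule.mk_eq_zero] using hc)⟩
        invFun := fun y => ⟨y.1.1, y.1.2, fun hc => y.2 (by exact_mod_cast Subtype.ext hc)⟩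
        left_inv := fun x => rfl
        right_inv := fun y => rfl }
    rw [Nat.card_congr e2, Nat.card_eq_fintype_card, Fintype.card_subtype_compl,
      Fintype.card_subtype_eq (0 : W), Module.card_eq_pow_finrank (K := K)]
  have h2 : Nat.card {x : V3 K // x ∈ W ∧ x ≠ 0}
      = Nat.card (Lset K W) * (Fintype.card K - 1) := by
    rw [Nat.card_congr e, Nat.card_prod, Nat.card_eq_fintype_card (α := Kˣ),
      Fintype.card_units]
  rw [← h2, h1]


instance (K V : Type) [DivisionRing K] [AddCommGroup V] [Module K V] [Finite V] :
    Finite (Projectivization K V) :=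
  inferInstanceAs (Finite (Quotient _))

noncomputable instance (K V : Type) [DivisionRing K] [AddCommGroup V] [Module K V] [Finite V] :
    Fintype (Projectivization K V) :=
  Fintype.ofFinite _

lemma two_le_q : 2 ≤ Fintype.card K := Fintype.one_lt_card

lemma submodule_ne_bot (a : PT K) : a.submodule ≠ ⊥ := by
  rw [Projectivization.submodule_eq]
  simp [Submodule.span_singleton_eq_bot, Projectivization.rep_nonzero]

lemma cube_id (q : ℕ) (hq : 1 ≤ q) : (q ^ 2 + q + 1) * (q - 1) = q ^ 3 - 1 := by
  obtain ⟨r, rfl⟩ : ∃ r, q = r + 1 := ⟨q - 1, by omega⟩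
  simp only [Nat.add_sub_cancel]
  exact Nat.eq_sub_of_add_eq (by ring)

lemma sq_id (q : ℕ) (hq : 1 ≤ q) : (q + 1) * (q - 1) = q ^ 2 - 1 := by
  obtain ⟨r, rfl⟩ : ∃ r, q = r + 1 := ⟨q - 1, by omega⟩
  simp only [Nat.add_sub_cancel]
  exact Nat.eq_sub_of_add_eq (by ring)

lemma card_PT : Nat.card (PT K) = Fintype.card K ^ 2 + Fintype.card K + 1 := by
  have h := card_Lset_mul K ⊤
  have htop : Lset K (⊤ : Submodule K (V3 K)) = Set.univ := by
    ext p; simp [Lset]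
  rw [htop, finrank_top, Module.finrank_fin_fun] at h
  have hu : Nat.card (Set.univ : Set (PT K)) = Nat.card (PT K) :=
    Nat.card_congr (Equiv.Set.univ _)
  rw [hu] at h
  have hq := two_le_q K
  refine Nat.eq_of_mul_eq_mul_right (m := Fintype.card K - 1) (by omega) ?_
  rw [h, cube_id _ (by omega)]

lemma card_Lset_two (W : Submodule K (V3 K)) (hW : Module.finrank K W = 2) :
    Nat.card (Lset K W) = Fintype.card K + 1 := by
  have h := card_Lset_mul K W
  rw [hW] at h
  have hq := two_le_q K
  refine Nat.eq_of_mul_eq_mul_right (m := Fintype.card K - 1) (by omega) ?_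
  rw [h, sq_id _ (by omega)]

lemma card_Lset_one (W : Submodule K (V3 K)) (hW : Module.finrank K W = 1) :
    Nat.card (Lset K W) = 1 := by
  have h := card_Lset_mul K W
  rw [hW, pow_one] at h
  have hq := two_le_q K
  refine Nat.eq_of_mul_eq_mul_right (m := Fintype.card K - 1) (by omega) ?_
  rw [h, one_mul]

lemma Lset_bot : Lset K (⊥ : Submodule K (V3 K)) = ∅ := by
  ext p
  simp only [Lset, Set.mem_setOf_eq, le_bot_iff, Set.mem_empty_iff_false, iff_false]
  exact submodule_ne_bot K p


lemma indep_comp_equiv {f : Fin 3 → PT K} (e : Fin 3 ≃ Fin 3) :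
    Projectivization.Independent (f ∘ e) ↔ Projectivization.Independent f := by
  rw [Projectivization.independent_iff, Projectivization.independent_iff]
  have : Projectivization.rep ∘ (f ∘ ⇑e) = (Projectivization.rep ∘ f) ∘ ⇑e := rfl
  rw [this, linearIndependent_equiv]

lemma indep_rotate {a b c : PT K} :
    Projectivization.Independent ![a, b, c] ↔ Projectivization.Independent ![b, c, a] := by
  have h : ![a, b, c] ∘ (finRotate 3) = ![b, c, a] := by
    funext i; fin_cases i <;> rfl
  rw [← indep_comp_equiv K (finRotate 3), h]

lemma indep3_iff (a b p : PT K) (hab : a ≠ b) :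
    Projectivization.Independent ![a, b, p] ↔ p ∉ Lset K (a.submodule ⊔ b.submodule) := by
  rw [Projectivization.independent_iff]
  have hrep : Projectivization.rep ∘ ![a, b, p] = ![a.rep, b.rep, p.rep] := by
    funext i; fin_cases i <;> rfl
  have hsnoc : ![a.rep, b.rep, p.rep] = Fin.snoc ![a.rep, b.rep] p.rep := by
    funext i; fin_cases i <;> rfl
  rw [hrep, hsnoc, linearIndependent_fin_snoc]
  have hpair : LinearIndependent K ![a.rep, b.rep] := by
    have := (Projectivization.independent_pair_iff_ne a b).2 hab
    rw [Projectivization.independent_iff] at this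
    have h2 : Projectivization.rep ∘ ![a, b] = ![a.rep, b.rep] := by
      funext i; fin_cases i <;> rfl
    rwa [h2] at this
  have hrange : Submodule.span K (Set.range ![a.rep, b.rep]) = a.submodule ⊔ b.submodule := by
    have : Set.range ![a.rep, b.rep] = {a.rep, b.rep} := by
      simp [Matrix.range_cons, Matrix.range_empty, Set.pair_comm]
    rw [this, ← Set.singleton_union, Submodule.span_union,
      Projectivization.submodule_eq, Projectivization.submodule_eq]
  rw [hrange]
  constructor
  · rintro ⟨-, h⟩ hc
    exact h ((submodule_le_iff_rep_mem K p _).1 hc)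
  · intro h
    exact ⟨hpair, fun hc => h ((submodule_le_iff_rep_mem K p _).2 hc)⟩

lemma mem_Lset_left (a b : PT K) : a ∈ Lset K (a.submodule ⊔ b.submodule) :=
  show a.submodule ≤ _ from le_sup_left

lemma mem_Lset_right (a b : PT K) : b ∈ Lset K (a.submodule ⊔ b.submodule) :=
  show b.submodule ≤ _ from le_sup_right

lemma finrank_point (a : PT K) : Module.finrank K a.submodule = 1 :=
  a.finrank_submodule

/-- distinct 1-dim submodules intersect trivially -/
lemma point_inf_eq_bot {a b : PT K} (hab : a ≠ b) : a.submodule ⊓ b.submodule = ⊥ := by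
  by_contra h
  have h1 : a.submodule ⊓ b.submodule ≤ a.submodule := inf_le_left
  have hr : 1 ≤ Module.finrank K (a.submodule ⊓ b.submodule : Submodule K (V3 K)) := by
    rcases Nat.eq_zero_or_pos (Module.finrank K (a.submodule ⊓ b.submodule : Submodule K (V3 K))) with h0 | h0
    · exact absurd (Submodule.finrank_eq_zero.1 h0) h
    · exact h0
  have ha : a.submodule ⊓ b.submodule = a.submodule :=
    Submodule.eq_of_le_of_finrank_le inf_le_left (by rw [finrank_point]; exact hr)
  have hb : a.submodule ⊓ b.submodule = b.submodule :=
    Submodule.eq_of_le_of_finrank_le inf_le_right (by rw [finrank_point]; exact hr)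
  exact hab (Projectivization.submodule_injective (ha ▸ hb))

lemma finrank_line (a b : PT K) (hab : a ≠ b) :
    Module.finrank K (a.submodule ⊔ b.submodule : Submodule K (V3 K)) = 2 := by
  have h := Submodule.finrank_sup_add_finrank_inf_eq a.submodule b.submodule
  rw [point_inf_eq_bot K hab, finrank_bot, finrank_point, finrank_point] at h
  omega

/-- a point not on a line meets it trivially -/
lemma point_inf_line_eq_bot {a : PT K} {W : Submodule K (V3 K)} (h : a ∉ Lset K W) :
    a.submodule ⊓ W = ⊥ := by
  by_contra hc
  have hr : 1 ≤ Module.finrank K (a.submodule ⊓ W : Submodule K (V3 K)) := by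
    rcases Nat.eq_zero_or_pos (Module.finrank K (a.submodule ⊓ W : Submodule K (V3 K))) with h0 | h0
    · exact absurd (Submodule.finrank_eq_zero.1 h0) hc
    · exact h0
  have ha : a.submodule ⊓ W = a.submodule :=
    Submodule.eq_of_le_of_finrank_le inf_le_left (by rw [finrank_point]; exact hr)
  exact h (le_trans (le_of_eq ha.symm) inf_le_right)

/-- two distinct planes in K³ meet in a line -/
lemma finrank_inf_planes {W₁ W₂ : Submodule K (V3 K)} (h1 : Module.finrank K W₁ = 2)
    (h2 : Module.finrank K W₂ = 2) (hne : W₁ ≠ W₂) :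
    Module.finrank K (W₁ ⊓ W₂ : Submodule K (V3 K)) = 1 := by
  have h := Submodule.finrank_sup_add_finrank_inf_eq W₁ W₂
  rw [h1, h2] at h
  have hle3 : Module.finrank K (W₁ ⊔ W₂ : Submodule K (V3 K)) ≤ 3 := by
    have := Submodule.finrank_le (W₁ ⊔ W₂ : Submodule K (V3 K))
    rwa [Module.finrank_fin_fun] at this
  have hge : 2 ≤ Module.finrank K (W₁ ⊔ W₂ : Submodule K (V3 K)) := by
    have := Submodule.finrank_mono (le_sup_left : W₁ ≤ W₁ ⊔ W₂)
    omega
  have hne3 : Module.finrank K (W₁ ⊔ W₂ : Submodule K (V3 K)) ≠ 2 := by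
    intro hc
    have e1 : W₁ = W₁ ⊔ W₂ :=
      Submodule.eq_of_le_of_finrank_le le_sup_left (by omega)
    have e2 : W₂ = W₁ ⊔ W₂ :=
      Submodule.eq_of_le_of_finrank_le le_sup_right (by omega)
    exact hne (e1.trans e2.symm)
  omega


lemma indep3_ne12 {a b c : PT K} (h : Projectivization.Independent ![a, b, c]) : a ≠ b := by
  rw [Projectivization.independent_iff] at h
  have h2 := h.comp ![0, 1] (by decide)
  have he : (Projectivization.rep ∘ ![a, b, c]) ∘ ![0, 1] = Projectivization.rep ∘ ![a, b] := by
    funext i; fin_cases i <;> rfl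
  rw [he] at h2
  rw [← Projectivization.independent_pair_iff_ne, Projectivization.independent_iff]
  exact h2

lemma indep3_ne23 {a b c : PT K} (h : Projectivization.Independent ![a, b, c]) : b ≠ c :=
  indep3_ne12 K (indep_rotate K |>.1 h)

lemma indep3_ne31 {a b c : PT K} (h : Projectivization.Independent ![a, b, c]) : c ≠ a :=
  indep3_ne12 K (indep_rotate K |>.1 (indep_rotate K |>.1 h))

/-- the fiber set of admissible new points -/
def Gset (x y z u : PT K) : Set (PT K) :=
  {p | Projectivization.Independent ![x, y, p] ∧ Projectivization.Independent ![y, p, z] ∧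
    Projectivization.Independent ![p, z, u]}

lemma Gset_eq (x y z u : PT K) (hxy : x ≠ y) (hyz : y ≠ z) (hzu : z ≠ u) :
    Gset K x y z u = (Lset K (x.submodule ⊔ y.submodule) ∪ Lset K (y.submodule ⊔ z.submodule)
      ∪ Lset K (z.submodule ⊔ u.submodule))ᶜ := by
  ext p
  have e1 : Projectivization.Independent ![x, y, p] ↔ p ∉ Lset K (x.submodule ⊔ y.submodule) :=
    indep3_iff K x y p hxy
  have e2 : Projectivization.Independent ![y, p, z] ↔ p ∉ Lset K (y.submodule ⊔ z.submodule) := by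
    rw [indep_rotate, indep_rotate]
    have : z.submodule ⊔ y.submodule = y.submodule ⊔ z.submodule := sup_comm _ _
    rw [indep3_iff K z y p (Ne.symm hyz), this]
  have e3 : Projectivization.Independent ![p, z, u] ↔ p ∉ Lset K (z.submodule ⊔ u.submodule) := by
    rw [indep_rotate]
    exact indep3_iff K z u p hzu
  simp only [Gset, Set.mem_setOf_eq, Set.mem_compl_iff, Set.mem_union, e1, e2, e3]
  tauto

lemma ncard_Lset_inter (W₁ W₂ : Submodule K (V3 K)) :
    Lset K W₁ ∩ Lset K W₂ = Lset K (W₁ ⊓ W₂) := by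
  ext p; simp [Lset, le_inf_iff]

lemma ncard_Lset (W : Submodule K (V3 K)) : (Lset K W).ncard = Nat.card (Lset K W) :=
  (Nat.card_coe_set_eq _).symm

lemma ncard_union_two_lines (W₁ W₂ : Submodule K (V3 K)) (h1 : Module.finrank K W₁ = 2)
    (h2 : Module.finrank K W₂ = 2) (hne : W₁ ≠ W₂) :
    (Lset K W₁ ∪ Lset K W₂).ncard = 2 * Fintype.card K + 1 := by
  have h := Set.ncard_union_add_ncard_inter (Lset K W₁) (Lset K W₂)
  rw [ncard_Lset_inter] at h
  rw [ncard_Lset, ncard_Lset, ncard_Lset, card_Lset_two K W₁ h1, card_Lset_two K W₂ h2,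
    card_Lset_one K _ (finrank_inf_planes K h1 h2 hne)] at h
  omega

lemma ncard_union_three_lines (W₁ W₂ W₃ : Submodule K (V3 K)) (h1 : Module.finrank K W₁ = 2)
    (h2 : Module.finrank K W₂ = 2) (h3 : Module.finrank K W₃ = 2)
    (h12 : W₁ ≠ W₂) (h13 : W₁ ≠ W₃) (h23 : W₂ ≠ W₃)
    (hbot : W₁ ⊓ W₂ ⊓ W₃ = ⊥) :
    (Lset K W₁ ∪ Lset K W₂ ∪ Lset K W₃).ncard = 3 * Fintype.card K := by
  have hAB := ncard_union_two_lines K W₁ W₂ h1 h2 h12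
  have hXY : ((Lset K W₁ ∪ Lset K W₂) ∩ Lset K W₃).ncard = 2 := by
    have hdist : (Lset K W₁ ∪ Lset K W₂) ∩ Lset K W₃
        = (Lset K W₁ ∩ Lset K W₃) ∪ (Lset K W₂ ∩ Lset K W₃) := by
      ext p; simp only [Set.mem_inter_iff, Set.mem_union]; tauto
    have hXYinter : (Lset K W₁ ∩ Lset K W₃) ∩ (Lset K W₂ ∩ Lset K W₃) = ∅ := by
      have : (Lset K W₁ ∩ Lset K W₃) ∩ (Lset K W₂ ∩ Lset K W₃) ⊆ Lset K (W₁ ⊓ W₂ ⊓ W₃) := by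
        rintro p ⟨⟨hp1, hp3⟩, ⟨hp2, -⟩⟩
        show p.submodule ≤ W₁ ⊓ W₂ ⊓ W₃
        exact le_inf (le_inf (hp1 : p.submodule ≤ W₁) (hp2 : p.submodule ≤ W₂)) (hp3 : p.submodule ≤ W₃)
      rw [hbot, Lset_bot] at this
      exact Set.subset_empty_iff.1 this
    have h := Set.ncard_union_add_ncard_inter (Lset K W₁ ∩ Lset K W₃) (Lset K W₂ ∩ Lset K W₃)
    rw [hXYinter, Set.ncard_empty, ncard_Lset_inter, ncard_Lset_inter] at h
    rw [hdist, ncard_Lset_inter, ncard_Lset_inter]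
    rw [ncard_Lset, ncard_Lset, card_Lset_one K _ (finrank_inf_planes K h1 h3 h13),
      card_Lset_one K _ (finrank_inf_planes K h2 h3 h23)] at h
    omega
  have h := Set.ncard_union_add_ncard_inter (Lset K W₁ ∪ Lset K W₂) (Lset K W₃)
  rw [hAB, hXY, ncard_Lset, card_Lset_two K W₃ h3] at h
  omega

lemma ncard_compl (s : Set (PT K)) :
    sᶜ.ncard = Fintype.card K ^ 2 + Fintype.card K + 1 - s.ncard := by
  have h := Set.ncard_add_ncard_compl s
  rw [card_PT] at h
  omega


lemma arith1 {q : ℕ} (hq : 2 ≤ q) : q ^ 2 + q + 1 - 3 * q = (q - 1) ^ 2 := by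
  obtain ⟨r, rfl⟩ : ∃ r, q = r + 1 := ⟨q - 1, by omega⟩
  simp only [Nat.add_sub_cancel]
  exact Nat.sub_eq_of_eq_add (by ring)

lemma arith2 {q : ℕ} (hq : 2 ≤ q) : q ^ 2 + q + 1 - (2 * q + 1) = q * (q - 1) := by
  obtain ⟨r, rfl⟩ : ∃ r, q = r + 1 := ⟨q - 1, by omega⟩
  simp only [Nat.add_sub_cancel]
  exact Nat.sub_eq_of_eq_add (by ring)

lemma arith3 {q : ℕ} (hq : 2 ≤ q) : q ^ 2 + q + 1 - (q + 1) = q ^ 2 := by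
  omega

lemma count_pp (x y z u : PT K) (h1 : Projectivization.Independent ![x, y, z])
    (h2 : Projectivization.Independent ![y, z, u]) :
    (Gset K x y z u).ncard = (Fintype.card K - 1) ^ 2 := by
  have hxy := indep3_ne12 K h1
  have hyz := indep3_ne12 K h2
  have hzu := indep3_ne23 K h2
  set L1 := x.submodule ⊔ y.submodule with hL1
  set L2 := y.submodule ⊔ z.submodule with hL2
  set L3 := z.submodule ⊔ u.submodule with hL3
  have r1 : Module.finrank K L1 = 2 := finrank_line K x y hxy
  have r2 : Module.finrank K L2 = 2 := finrank_line K y z hyz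
  have r3 : Module.finrank K L3 = 2 := finrank_line K z u hzu
  have hzL1 : z ∉ Lset K L1 := (indep3_iff K x y z hxy).1 h1
  have huL2 : u ∉ Lset K L2 := (indep3_iff K y z u hyz).1 h2
  have hyL3 : y ∉ Lset K L3 := by
    have h2' := (indep_rotate K).1 h2
    exact (indep3_iff K z u y hzu).1 h2'
  have h12 : L1 ≠ L2 := fun hc => hzL1 (hc ▸ mem_Lset_right K y z)
  have h23 : L2 ≠ L3 := fun hc => huL2 (hc ▸ mem_Lset_right K z u)
  have h13 : L1 ≠ L3 := fun hc => hyL3 (hc ▸ mem_Lset_right K x y)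
  have hbot : L1 ⊓ L2 ⊓ L3 = ⊥ := by
    have hyle : y.submodule ≤ L1 ⊓ L2 := le_inf le_sup_right le_sup_left
    have hinf : L1 ⊓ L2 = y.submodule := by
      refine (Submodule.eq_of_le_of_finrank_le hyle ?_).symm
      rw [finrank_point, finrank_inf_planes K r1 r2 h12]
    rw [hinf]
    exact point_inf_line_eq_bot K hyL3
  rw [Gset_eq K x y z u hxy hyz hzu, ncard_compl,
    ncard_union_three_lines K L1 L2 L3 r1 r2 r3 h12 h13 h23 hbot, arith1 (two_le_q K)]

lemma count_pm (x y z u : PT K) (h1 : Projectivization.Independent ![x, y, z])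
    (h2 : ¬ Projectivization.Independent ![y, z, u]) (hzu : z ≠ u) :
    (Gset K x y z u).ncard = Fintype.card K * (Fintype.card K - 1) := by
  have hxy := indep3_ne12 K h1
  have hyz := indep3_ne23 K h1
  set L1 := x.submodule ⊔ y.submodule with hL1
  set L2 := y.submodule ⊔ z.submodule with hL2
  set L3 := z.submodule ⊔ u.submodule with hL3
  have r1 : Module.finrank K L1 = 2 := finrank_line K x y hxy
  have r2 : Module.finrank K L2 = 2 := finrank_line K y z hyz
  have r3 : Module.finrank K L3 = 2 := finrank_line K z u hzu
  have huL2 : u ∈ Lset K L2 := by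
    by_contra hc
    exact h2 ((indep3_iff K y z u hyz).2 hc)
  have hL32 : L3 = L2 := by
    refine Submodule.eq_of_le_of_finrank_le (sup_le ?_ ?_) (by omega)
    · exact le_sup_right
    · exact huL2
  have hzL1 : z ∉ Lset K L1 := (indep3_iff K x y z hxy).1 h1
  have h12 : L1 ≠ L2 := fun hc => hzL1 (hc ▸ mem_Lset_right K y z)
  rw [Gset_eq K x y z u hxy hyz hzu, ← hL1, ← hL2, ← hL3, hL32]
  have hunion : Lset K L1 ∪ Lset K L2 ∪ Lset K L2 = Lset K L1 ∪ Lset K L2 := by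
    rw [Set.union_assoc, Set.union_self]
  rw [hunion, ncard_compl, ncard_union_two_lines K L1 L2 r1 r2 h12, arith2 (two_le_q K)]

lemma count_mp (x y z u : PT K) (h1 : ¬ Projectivization.Independent ![x, y, z])
    (h2 : Projectivization.Independent ![y, z, u]) (hxy : x ≠ y) :
    (Gset K x y z u).ncard = Fintype.card K * (Fintype.card K - 1) := by
  have hyz := indep3_ne12 K h2
  have hzu := indep3_ne23 K h2
  set L1 := x.submodule ⊔ y.submodule with hL1
  set L2 := y.submodule ⊔ z.submodule with hL2
  set L3 := z.submodule ⊔ u.submodule with hL3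
  have r1 : Module.finrank K L1 = 2 := finrank_line K x y hxy
  have r2 : Module.finrank K L2 = 2 := finrank_line K y z hyz
  have r3 : Module.finrank K L3 = 2 := finrank_line K z u hzu
  have hzL1 : z ∈ Lset K L1 := by
    by_contra hc
    exact h1 ((indep3_iff K x y z hxy).2 hc)
  have hL21 : L2 = L1 := by
    refine Submodule.eq_of_le_of_finrank_le (sup_le ?_ ?_) (by omega)
    · exact le_sup_right
    · exact hzL1
  have huL2 : u ∉ Lset K L2 := (indep3_iff K y z u hyz).1 h2
  have h13 : L1 ≠ L3 := by
    intro hc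
    exact huL2 (hL21.trans hc ▸ mem_Lset_right K z u)
  rw [Gset_eq K x y z u hxy hyz hzu, ← hL1, ← hL2, ← hL3, hL21]
  have hunion : Lset K L1 ∪ Lset K L1 ∪ Lset K L3 = Lset K L1 ∪ Lset K L3 := by
    rw [Set.union_self]
  rw [hunion, ncard_compl, ncard_union_two_lines K L1 L3 r1 r3 h13, arith2 (two_le_q K)]

lemma count_mm (x y z u : PT K) (h1 : ¬ Projectivization.Independent ![x, y, z])
    (h2 : ¬ Projectivization.Independent ![y, z, u]) (hxy : x ≠ y) (hyz : y ≠ z) (hzu : z ≠ u) :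
    (Gset K x y z u).ncard = Fintype.card K ^ 2 := by
  set L1 := x.submodule ⊔ y.submodule with hL1
  set L2 := y.submodule ⊔ z.submodule with hL2
  set L3 := z.submodule ⊔ u.submodule with hL3
  have r1 : Module.finrank K L1 = 2 := finrank_line K x y hxy
  have r2 : Module.finrank K L2 = 2 := finrank_line K y z hyz
  have r3 : Module.finrank K L3 = 2 := finrank_line K z u hzu
  have hzL1 : z ∈ Lset K L1 := by
    by_contra hc
    exact h1 ((indep3_iff K x y z hxy).2 hc)
  have hL21 : L2 = L1 := by
    refine Submodule.eq_of_le_of_finrank_le (sup_le ?_ ?_) (by omega)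
    · exact le_sup_right
    · exact hzL1
  have huL2 : u ∈ Lset K L2 := by
    by_contra hc
    exact h2 ((indep3_iff K y z u hyz).2 hc)
  have hL32 : L3 = L2 := by
    refine Submodule.eq_of_le_of_finrank_le (sup_le ?_ ?_) (by omega)
    · exact le_sup_right
    · exact huL2
  rw [Gset_eq K x y z u hxy hyz hzu, ← hL1, ← hL2, ← hL3, hL32, hL21]
  have hunion : Lset K L1 ∪ Lset K L1 ∪ Lset K L1 = Lset K L1 := by
    rw [Set.union_self, Set.union_self]
  rw [hunion, ncard_compl, ncard_Lset, card_Lset_two K L1 r1, arith3 (two_le_q K)]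


/-! ### triple independence, reversal symmetry -/

def trip (N : ℕ) (w : ZMod N → PT K) (i : ZMod N) : Prop :=
  Projectivization.Independent ![w i, w (i + 1), w (i + 2)]

lemma tripleIndep_iff_trip (N : ℕ) (w : ZMod N → PT K) (j : ℕ) :
    tripleIndep K N w j ↔ trip K N w (j : ZMod N) := by
  unfold tripleIndep trip
  have he : (fun t : Fin 3 => w (((j + (t : ℕ) : ℕ)) : ZMod N))
      = ![w (j : ZMod N), w ((j : ZMod N) + 1), w ((j : ZMod N) + 2)] := by
    funext t
    fin_cases t <;> simp <;> congr 1 <;> push_cast <;> ring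
  exact Iff.of_eq (congrArg _ he)

lemma indep_rev {a b c : PT K} :
    Projectivization.Independent ![a, b, c] ↔ Projectivization.Independent ![c, b, a] := by
  have h : ![a, b, c] ∘ (Equiv.swap (0 : Fin 3) 2) = ![c, b, a] := by
    funext i; fin_cases i <;> simp [Equiv.swap_apply_of_ne_of_ne]
  rw [← indep_comp_equiv K (Equiv.swap (0 : Fin 3) 2), h]

def revMap (N : ℕ) (w : ZMod N → PT K) : ZMod N → PT K := fun j => w (1 - j)

lemma trip_rev (N : ℕ) (w : ZMod N → PT K) (i : ZMod N) :
    trip K N (revMap K N w) i ↔ trip K N w (-1 - i) := by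
  unfold trip revMap
  have h2 : (1 : ZMod N) - (i + 1) = -i := by ring
  have h3 : (1 : ZMod N) - (i + 2) = -1 - i := by ring
  have h4 : (-1 : ZMod N) - i + 1 = -i := by ring
  have h5 : (-1 : ZMod N) - i + 2 = 1 - i := by ring
  rw [h2, h3, h4, h5]
  exact indep_rev K

lemma cast_sub_one (m : ℕ) (hm : 3 ≤ m) : ((m - 1 : ℕ) : ZMod m) = -1 := by
  have : ((m - 1 : ℕ) : ZMod m) = (m : ZMod m) - 1 := by
    push_cast [Nat.cast_sub (by omega : 1 ≤ m)]; ring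
  rw [this, ZMod.natCast_self, zero_sub]

lemma cast_sub (m j : ℕ) (hm : 3 ≤ m) (hj : j + 1 ≤ m) :
    ((m - (j + 1) : ℕ) : ZMod m) = -1 - (j : ZMod m) := by
  have : ((m - (j + 1) : ℕ) : ZMod m) = (m : ZMod m) - ((j : ZMod m) + 1) := by
    push_cast [Nat.cast_sub hj]; ring
  rw [this, ZMod.natCast_self]; ring

lemma mem_C3s_rev (m : ℕ) (hm : 3 ≤ m) (s₁ s₂ : Bool) (w : ZMod m → PT K)
    (hw : w ∈ C3s K m s₁ s₂) : revMap K m w ∈ C3s K m s₂ s₁ := by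
  obtain ⟨hne, hint, ht1, ht2⟩ := hw
  have c0 : ((m : ℕ) : ZMod m) = 0 := ZMod.natCast_self m
  refine ⟨?_, ?_, ?_, ?_⟩
  · -- (σw) m ≠ (σw) 1
    have h1 : ((1 : ℕ) : ZMod m) = 1 := Nat.cast_one
    rw [c0, h1] at hne ⊢
    show w (1 - 0) ≠ w (1 - 1)
    rw [sub_zero, sub_self]
    exact fun hc => hne (hc.symm)
  · intro j hj1 hj2
    rw [tripleIndep_iff_trip, trip_rev]
    have hcast : (-1 : ZMod m) - (j : ZMod m) = ((m - (j + 1) : ℕ) : ZMod m) :=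
      (cast_sub m j hm (by omega)).symm
    rw [hcast, ← tripleIndep_iff_trip]
    exact hint (m - (j + 1)) (by omega) (by omega)
  · -- triple at m - 1  ↔  s₂
    rw [tripleIndep_iff_trip, trip_rev, cast_sub_one m hm]
    have : (-1 : ZMod m) - (-1) = ((m : ℕ) : ZMod m) := by rw [c0]; ring
    rw [this, ← tripleIndep_iff_trip]
    exact ht2
  · -- triple at m  ↔  s₁
    rw [tripleIndep_iff_trip, trip_rev, c0]
    have : (-1 : ZMod m) - 0 = ((m - 1 : ℕ) : ZMod m) := by rw [cast_sub_one m hm]; ring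
    rw [this, ← tripleIndep_iff_trip]
    exact ht1

lemma card_C3s_swap (m : ℕ) (hm : 3 ≤ m) :
    Nat.card (C3s K m false true) = Nat.card (C3s K m true false) := by
  refine Nat.card_congr ⟨fun w => ⟨revMap K m w.1, mem_C3s_rev K m hm _ _ _ w.2⟩,
    fun w => ⟨revMap K m w.1, mem_C3s_rev K m hm _ _ _ w.2⟩, ?_, ?_⟩ <;>
  · rintro ⟨w, hw⟩
    refine Subtype.ext (funext fun j => ?_)
    show w (1 - (1 - j)) = w j
    congr 1; ring


/-! ### restriction / extension -/

def restr (m : ℕ) (v : ZMod (m + 1) → PT K) : ZMod m → PT K :=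
  fun j => v (((if j.val = 0 then m else j.val : ℕ)) : ZMod (m + 1))

def ext2 (m : ℕ) (w : ZMod m → PT K) (p : PT K) : ZMod (m + 1) → PT K :=
  fun i => if i = 0 then p else w ((i.val : ℕ) : ZMod m)

lemma cast_ne_zero_zmod (m c : ℕ) (h1 : 1 ≤ c) (h2 : c ≤ m) :
    ((c : ℕ) : ZMod (m + 1)) ≠ 0 := by
  intro h
  have := congrArg ZMod.val h
  rw [ZMod.val_cast_of_lt (by omega), ZMod.val_zero] at this
  omega

lemma ext2_zero (m : ℕ) (w : ZMod m → PT K) (p : PT K) : ext2 K m w p 0 = p := by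
  unfold ext2; rw [if_pos rfl]

lemma restr_at (m : ℕ) (hm : 3 ≤ m) (v : ZMod (m + 1) → PT K) (j : ℕ)
    (h1 : 1 ≤ j) (h2 : j ≤ m) :
    restr K m v ((j : ℕ) : ZMod m) = v ((j : ℕ) : ZMod (m + 1)) := by
  haveI : NeZero m := ⟨by omega⟩
  unfold restr
  by_cases hj : j = m
  · subst hj
    rw [ZMod.val_natCast, Nat.mod_self, if_pos rfl]
  · rw [ZMod.val_natCast, Nat.mod_eq_of_lt (by omega), if_neg (by omega)]

lemma ext2_restr (m : ℕ) (hm : 3 ≤ m) (v : ZMod (m + 1) → PT K) :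
    ext2 K m (restr K m v) (v 0) = v := by
  funext i
  unfold ext2
  by_cases h0 : i = 0
  · rw [if_pos h0, h0]
  · rw [if_neg h0]
    have hvlt : i.val < m + 1 := ZMod.val_lt i
    have hv0 : i.val ≠ 0 := fun hc => h0 ((ZMod.val_eq_zero i).1 hc)
    rw [restr_at K m hm v i.val (by omega) (by omega), ZMod.natCast_rightInverse i]

lemma restr_ext2 (m : ℕ) (hm : 3 ≤ m) (w : ZMod m → PT K) (p : PT K) :
    restr K m (ext2 K m w p) = w := by
  haveI : NeZero m := ⟨by omega⟩
  funext j
  unfold restr ext2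
  by_cases hj : j.val = 0
  · rw [if_pos hj, if_neg (cast_ne_zero_zmod m m (by omega) le_rfl)]
    rw [ZMod.val_natCast, Nat.mod_eq_of_lt (by omega)]
    have : ((m : ℕ) : ZMod m) = j := by
      rw [ZMod.natCast_self]
      exact ((ZMod.val_eq_zero j).1 hj).symm
    rw [this]
  · have hjlt : j.val < m := ZMod.val_lt j
    rw [if_neg hj, if_neg (cast_ne_zero_zmod m j.val (by omega) (by omega))]
    rw [ZMod.val_natCast, Nat.mod_eq_of_lt (by omega), ZMod.natCast_rightInverse j]

/-! ### the base set and fibers -/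

def Sset (m : ℕ) : Set (ZMod m → PT K) :=
  {w | (∀ j : ℕ, 1 ≤ j → j ≤ m - 2 → tripleIndep K m w j) ∧
    w ((m : ℕ) : ZMod m) ≠ w ((1 : ℕ) : ZMod m)}

def fib (m : ℕ) (w : ZMod m → PT K) : Set (PT K) :=
  Gset K (w ((m - 1 : ℕ) : ZMod m)) (w ((m : ℕ) : ZMod m))
    (w ((1 : ℕ) : ZMod m)) (w ((2 : ℕ) : ZMod m))

lemma mem_Ccal_iff (N : ℕ) (v : ZMod N → PT K) :
    v ∈ Ccal K 3 N ↔ ∀ i : ZMod N, trip K N v i := by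
  unfold Ccal trip
  refine forall_congr' fun i => Iff.of_eq (congrArg _ ?_)
  funext t
  fin_cases t <;> simp <;> congr 1 <;> push_cast <;> ring

lemma tripleIndep_restr (m : ℕ) (hm : 3 ≤ m) (v : ZMod (m + 1) → PT K) (j : ℕ)
    (h1 : 1 ≤ j) (h2 : j + 2 ≤ m) :
    tripleIndep K m (restr K m v) j ↔ tripleIndep K (m + 1) v j := by
  unfold tripleIndep
  refine Iff.of_eq (congrArg _ ?_)
  funext t
  have ht : (t : ℕ) ≤ 2 := by omega
  exact restr_at K m hm v (j + (t : ℕ)) (by omega) (by omega)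

lemma top1 (m : ℕ) (hm : 3 ≤ m) (v : ZMod (m + 1) → PT K) :
    tripleIndep K (m + 1) v (m - 1) ↔
      Projectivization.Independent
        ![restr K m v ((m - 1 : ℕ) : ZMod m), restr K m v ((m : ℕ) : ZMod m), v 0] := by
  rw [tripleIndep_iff_trip]
  unfold trip
  rw [restr_at K m hm v (m - 1) (by omega) (by omega), restr_at K m hm v m (by omega) le_rfl]
  have e1 : ((m - 1 : ℕ) : ZMod (m + 1)) + 1 = ((m : ℕ) : ZMod (m + 1)) := by
    have : ((m : ℕ) : ZMod (m + 1)) = ((m - 1 : ℕ) : ZMod (m + 1)) + 1 := by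
      push_cast [Nat.cast_sub (by omega : 1 ≤ m)]; ring
    rw [this]
  have e2 : ((m - 1 : ℕ) : ZMod (m + 1)) + 2 = 0 := by
    have : ((m - 1 : ℕ) : ZMod (m + 1)) + 2 = ((m + 1 : ℕ) : ZMod (m + 1)) := by
      push_cast [Nat.cast_sub (by omega : 1 ≤ m)]; ring
    rw [this, ZMod.natCast_self]
  rw [e1, e2]

lemma top2 (m : ℕ) (hm : 3 ≤ m) (v : ZMod (m + 1) → PT K) :
    tripleIndep K (m + 1) v m ↔
      Projectivization.Independent
        ![restr K m v ((m : ℕ) : ZMod m), v 0, restr K m v ((1 : ℕ) : ZMod m)] := by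
  rw [tripleIndep_iff_trip]
  unfold trip
  rw [restr_at K m hm v m (by omega) le_rfl, restr_at K m hm v 1 le_rfl (by omega)]
  have e1 : ((m : ℕ) : ZMod (m + 1)) + 1 = 0 := by
    have : ((m : ℕ) : ZMod (m + 1)) + 1 = ((m + 1 : ℕ) : ZMod (m + 1)) := by push_cast; ring
    rw [this, ZMod.natCast_self]
  have e2 : ((m : ℕ) : ZMod (m + 1)) + 2 = ((1 : ℕ) : ZMod (m + 1)) := by
    have h0 : ((m : ℕ) : ZMod (m + 1)) + 2 = ((m + 1 : ℕ) : ZMod (m + 1)) + 1 := by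
      push_cast; ring
    rw [h0, ZMod.natCast_self, zero_add, Nat.cast_one]
  rw [e1, e2]

lemma top3 (m : ℕ) (hm : 3 ≤ m) (v : ZMod (m + 1) → PT K) :
    tripleIndep K (m + 1) v (m + 1) ↔
      Projectivization.Independent
        ![v 0, restr K m v ((1 : ℕ) : ZMod m), restr K m v ((2 : ℕ) : ZMod m)] := by
  rw [tripleIndep_iff_trip]
  unfold trip
  rw [restr_at K m hm v 1 le_rfl (by omega), restr_at K m hm v 2 (by omega) (by omega)]
  have e0 : ((m + 1 : ℕ) : ZMod (m + 1)) = 0 := ZMod.natCast_self _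
  have e1 : ((m + 1 : ℕ) : ZMod (m + 1)) + 1 = ((1 : ℕ) : ZMod (m + 1)) := by
    rw [e0, zero_add, Nat.cast_one]
  have e2 : ((m + 1 : ℕ) : ZMod (m + 1)) + 2 = ((2 : ℕ) : ZMod (m + 1)) := by
    rw [e0, zero_add, Nat.cast_two]
  rw [e1, e2, e0]

lemma crux (m : ℕ) (hm : 3 ≤ m) (v : ZMod (m + 1) → PT K) :
    v ∈ Ccal K 3 (m + 1) ↔ restr K m v ∈ Sset K m ∧ v 0 ∈ fib K m (restr K m v) := by
  rw [mem_Ccal_iff]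
  constructor
  · intro h
    have hall : ∀ j : ℕ, tripleIndep K (m + 1) v j := by
      intro j
      rw [tripleIndep_iff_trip]
      exact h _
    refine ⟨⟨fun j h1 h2 => (tripleIndep_restr K m hm v j h1 (by omega)).2 (hall j), ?_⟩, ?_, ?_, ?_⟩
    · have := (top2 K m hm v).1 (hall m)
      exact (indep3_ne31 K this).symm
    · exact (top1 K m hm v).1 (hall (m - 1))
    · exact (top2 K m hm v).1 (hall m)
    · exact (top3 K m hm v).1 (hall (m + 1))
  · rintro ⟨⟨hint, hne⟩, hf1, hf2, hf3⟩
    intro i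
    haveI : NeZero (m + 1) := ⟨by omega⟩
    obtain ⟨j, hj1, hj2, hij⟩ : ∃ j : ℕ, 1 ≤ j ∧ j ≤ m + 1 ∧ i = ((j : ℕ) : ZMod (m + 1)) := by
      by_cases h0 : i.val = 0
      · exact ⟨m + 1, by omega, le_rfl, by rw [ZMod.natCast_self]; exact (ZMod.val_eq_zero i).1 h0⟩
      · exact ⟨i.val, by omega, by have := ZMod.val_lt i; omega,
          (ZMod.natCast_rightInverse i).symm⟩
    rw [hij, ← tripleIndep_iff_trip]
    rcases (by omega : (1 ≤ j ∧ j ≤ m - 2) ∨ j = m - 1 ∨ j = m ∨ j = m + 1) with ⟨ha, hb⟩ | h | h | h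
    · exact (tripleIndep_restr K m hm v j ha (by omega)).1 (hint j ha hb)
    · rw [h, top1 K m hm v]; exact hf1
    · rw [h, top2 K m hm v]; exact hf2
    · rw [h, top3 K m hm v]; exact hf3

lemma card_Ccal_succ (m : ℕ) (hm : 3 ≤ m) :
    Nat.card (Ccal K 3 (m + 1))
      = Nat.card {x : (ZMod m → PT K) × PT K // x.1 ∈ Sset K m ∧ x.2 ∈ fib K m x.1} := by
  refine Nat.card_congr ⟨fun v => ⟨(restr K m v.1, v.1 0), (crux K m hm v.1).1 v.2⟩,
    fun x => ⟨ext2 K m x.1.1 x.1.2, (crux K m hm _).2 ?_⟩, ?_, ?_⟩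
  · rw [restr_ext2 K m hm, ext2_zero]
    exact x.2
  · rintro ⟨v, hv⟩
    exact Subtype.ext (ext2_restr K m hm v)
  · rintro ⟨⟨w, p⟩, h⟩
    refine Subtype.ext (Prod.ext ?_ ?_)
    · exact restr_ext2 K m hm w p
    · exact ext2_zero K m w p


/-! ### class characterizations -/

lemma cast_m_sub (m c : ℕ) (hc : c ≤ m) : ((m - c : ℕ) : ZMod m) = -(c : ZMod m) := by
  have : ((m - c : ℕ) : ZMod m) = (m : ZMod m) - c := by
    push_cast [Nat.cast_sub hc]; ring
  rw [this, ZMod.natCast_self, zero_sub]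

lemma t1_iff (m : ℕ) (hm : 3 ≤ m) (w : ZMod m → PT K) :
    tripleIndep K m w (m - 1) ↔ Projectivization.Independent
      ![w ((m - 1 : ℕ) : ZMod m), w ((m : ℕ) : ZMod m), w ((1 : ℕ) : ZMod m)] := by
  rw [tripleIndep_iff_trip]
  unfold trip
  have e1 : ((m - 1 : ℕ) : ZMod m) + 1 = ((m : ℕ) : ZMod m) := by
    rw [cast_m_sub m 1 (by omega), ZMod.natCast_self]; ring
  have e2 : ((m - 1 : ℕ) : ZMod m) + 2 = ((1 : ℕ) : ZMod m) := by
    rw [cast_m_sub m 1 (by omega), Nat.cast_one]; ring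
  rw [e1, e2]

lemma t2_iff (m : ℕ) (hm : 3 ≤ m) (w : ZMod m → PT K) :
    tripleIndep K m w m ↔ Projectivization.Independent
      ![w ((m : ℕ) : ZMod m), w ((1 : ℕ) : ZMod m), w ((2 : ℕ) : ZMod m)] := by
  rw [tripleIndep_iff_trip]
  unfold trip
  have e1 : ((m : ℕ) : ZMod m) + 1 = ((1 : ℕ) : ZMod m) := by
    rw [ZMod.natCast_self, Nat.cast_one]; ring
  have e2 : ((m : ℕ) : ZMod m) + 2 = ((2 : ℕ) : ZMod m) := by
    rw [ZMod.natCast_self, Nat.cast_two]; ring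
  rw [e1, e2]

lemma tint1_iff (m : ℕ) (hm : 3 ≤ m) (w : ZMod m → PT K) :
    tripleIndep K m w 1 ↔ Projectivization.Independent
      ![w ((1 : ℕ) : ZMod m), w ((2 : ℕ) : ZMod m), w ((3 : ℕ) : ZMod m)] := by
  rw [tripleIndep_iff_trip]
  unfold trip
  have e1 : ((1 : ℕ) : ZMod m) + 1 = ((2 : ℕ) : ZMod m) := by push_cast; ring
  have e2 : ((1 : ℕ) : ZMod m) + 2 = ((3 : ℕ) : ZMod m) := by push_cast; ring
  rw [e1, e2]

lemma tmm2_iff (m : ℕ) (hm : 3 ≤ m) (w : ZMod m → PT K) :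
    tripleIndep K m w (m - 2) ↔ Projectivization.Independent
      ![w ((m - 2 : ℕ) : ZMod m), w ((m - 1 : ℕ) : ZMod m), w ((m : ℕ) : ZMod m)] := by
  rw [tripleIndep_iff_trip]
  unfold trip
  have e1 : ((m - 2 : ℕ) : ZMod m) + 1 = ((m - 1 : ℕ) : ZMod m) := by
    rw [cast_m_sub m 2 (by omega), cast_m_sub m 1 (by omega)]; push_cast; ring
  have e2 : ((m - 2 : ℕ) : ZMod m) + 2 = ((m : ℕ) : ZMod m) := by
    rw [cast_m_sub m 2 (by omega), ZMod.natCast_self]; ring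
  rw [e1, e2]

lemma mem_Ccal_m (m : ℕ) (hm : 3 ≤ m) (w : ZMod m → PT K) :
    w ∈ Ccal K 3 m ↔ ∀ j : ℕ, 1 ≤ j → j ≤ m → tripleIndep K m w j := by
  haveI : NeZero m := ⟨by omega⟩
  rw [mem_Ccal_iff]
  constructor
  · intro h j _ _
    rw [tripleIndep_iff_trip]
    exact h _
  · intro h i
    obtain ⟨j, hj1, hj2, hij⟩ : ∃ j : ℕ, 1 ≤ j ∧ j ≤ m ∧ i = ((j : ℕ) : ZMod m) := by
      by_cases h0 : i.val = 0
      · exact ⟨m, by omega, le_rfl, by rw [ZMod.natCast_self]; exact (ZMod.val_eq_zero i).1 h0⟩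
      · exact ⟨i.val, by omega, by have := ZMod.val_lt i; omega,
          (ZMod.natCast_rightInverse i).symm⟩
    rw [hij, ← tripleIndep_iff_trip]
    exact h j hj1 hj2

lemma Ccal_m_char (m : ℕ) (hm : 3 ≤ m) (w : ZMod m → PT K) :
    w ∈ Ccal K 3 m ↔
      w ∈ Sset K m ∧ tripleIndep K m w (m - 1) ∧ tripleIndep K m w m := by
  rw [mem_Ccal_m K m hm]
  constructor
  · intro h
    refine ⟨⟨fun j h1 h2 => h j h1 (by omega), ?_⟩, h (m - 1) (by omega) (by omega),
      h m (by omega) le_rfl⟩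
    exact indep3_ne12 K ((t2_iff K m hm w).1 (h m (by omega) le_rfl))
  · rintro ⟨⟨hint, hne⟩, h1, h2⟩
    intro j hj1 hj2
    rcases (by omega : (1 ≤ j ∧ j ≤ m - 2) ∨ j = m - 1 ∨ j = m) with ⟨ha, hb⟩ | h | h
    · exact hint j ha hb
    · rw [h]; exact h1
    · rw [h]; exact h2

lemma C3s_char (m : ℕ) (hm : 3 ≤ m) (s₁ s₂ : Bool) (w : ZMod m → PT K) :
    w ∈ C3s K m s₁ s₂ ↔
      w ∈ Sset K m ∧ (tripleIndep K m w (m - 1) ↔ s₁ = true)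
        ∧ (tripleIndep K m w m ↔ s₂ = true) := by
  unfold C3s Sset
  simp only [Set.mem_setOf_eq]
  tauto

/-! ### fiber cardinalities per class -/

lemma fib_card (m : ℕ) (hm : 3 ≤ m) (w : ZMod m → PT K) (hw : w ∈ Sset K m) :
    (fib K m w).ncard =
      if tripleIndep K m w (m - 1) then
        (if tripleIndep K m w m then (Fintype.card K - 1) ^ 2
         else Fintype.card K * (Fintype.card K - 1))
      else
        (if tripleIndep K m w m then Fintype.card K * (Fintype.card K - 1)
         else Fintype.card K ^ 2) := by
  obtain ⟨hint, hne⟩ := hw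
  set x := w ((m - 1 : ℕ) : ZMod m)
  set y := w ((m : ℕ) : ZMod m)
  set z := w ((1 : ℕ) : ZMod m)
  set u := w ((2 : ℕ) : ZMod m)
  have ht1 := t1_iff K m hm w
  have ht2 := t2_iff K m hm w
  have hzu : z ≠ u := indep3_ne12 K ((tint1_iff K m hm w).1 (hint 1 le_rfl (by omega)))
  have hxy : x ≠ y := indep3_ne23 K ((tmm2_iff K m hm w).1 (hint (m - 2) (by omega) (by omega)))
  have hyz : y ≠ z := hne
  by_cases h1 : tripleIndep K m w (m - 1) <;> by_cases h2 : tripleIndep K m w m <;>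
    simp only [h1, h2, if_true, if_false, if_pos, if_neg, not_false_iff]
  · exact count_pp K x y z u (ht1.1 h1) (ht2.1 h2)
  · exact count_pm K x y z u (ht1.1 h1) (fun hc => h2 (ht2.2 hc)) hzu
  · exact count_mp K x y z u (fun hc => h1 (ht1.2 hc)) (ht2.1 h2) hxy
  · exact count_mm K x y z u (fun hc => h1 (ht1.2 hc)) (fun hc => h2 (ht2.2 hc)) hxy hyz hzu

/-! ### the sum -/

lemma card_fiber_sum (m : ℕ) [NeZero m] (hm : 3 ≤ m) :
    Nat.card {x : (ZMod m → PT K) × PT K // x.1 ∈ Sset K m ∧ x.2 ∈ fib K m x.1}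
      = ∑ w ∈ (Sset K m).toFinset, (fib K m w).ncard := by
  rw [Nat.card_congr
    (Equiv.subtypeProdEquivSigmaSubtype (fun a b => a ∈ Sset K m ∧ b ∈ fib K m a)),
    Nat.card_eq_fintype_card, Fintype.card_sigma]
  have hterm : ∀ a : ZMod m → PT K,
      Fintype.card {b // a ∈ Sset K m ∧ b ∈ fib K m a}
        = if a ∈ (Sset K m).toFinset then (fib K m a).ncard else 0 := by
    intro a
    by_cases ha : a ∈ Sset K m
    · rw [if_pos (Set.mem_toFinset.2 ha)]
      rw [Fintype.card_congr (Equiv.subtypeEquivRight (fun b => and_iff_right ha))]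
      rw [Set.ncard_eq_toFinset_card', Set.toFinset_card]
    · rw [if_neg (fun hc => ha (Set.mem_toFinset.1 hc))]
      exact Fintype.card_eq_zero_iff.2 ⟨fun b => ha b.2.1⟩
  rw [Finset.sum_congr rfl (fun a _ => hterm a), Finset.sum_ite_mem, Finset.univ_inter]

lemma card_step (m : ℕ) (hm : 3 ≤ m) :
    Nat.card (Ccal K 3 (m + 1))
      = Nat.card (Ccal K 3 m) * (Fintype.card K - 1) ^ 2
        + Nat.card (C3s K m true false) * (Fintype.card K * (Fintype.card K - 1))
        + Nat.card (C3s K m false true) * (Fintype.card K * (Fintype.card K - 1))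
        + Nat.card (C3s K m false false) * Fintype.card K ^ 2 := by
  haveI : NeZero m := ⟨by omega⟩
  rw [card_Ccal_succ K m hm, card_fiber_sum K m hm]
  classical
  set t₁ : (ZMod m → PT K) → Prop := fun w => tripleIndep K m w (m - 1) with ht₁
  set t₂ : (ZMod m → PT K) → Prop := fun w => tripleIndep K m w m with ht₂
  set f : (ZMod m → PT K) → ℕ := fun w => (fib K m w).ncard with hf
  have hsplit1 := Finset.sum_filter_add_sum_filter_not (Sset K m).toFinset t₁ f
  have hsplit2 := Finset.sum_filter_add_sum_filter_not
    ((Sset K m).toFinset.filter t₁) t₂ f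
  have hsplit3 := Finset.sum_filter_add_sum_filter_not
    ((Sset K m).toFinset.filter (fun w => ¬ t₁ w)) t₂ f
  have hCtt : ((Sset K m).toFinset.filter t₁).filter t₂ = (Ccal K 3 m).toFinset := by
    ext w
    simp only [Finset.mem_filter, Set.mem_toFinset, Ccal_m_char K m hm w, ht₁, ht₂]
    tauto
  have hCtf : ((Sset K m).toFinset.filter t₁).filter (fun w => ¬ t₂ w)
      = (C3s K m true false).toFinset := by
    ext w
    simp only [Finset.mem_filter, Set.mem_toFinset, C3s_char K m hm true false w, ht₁, ht₂]
    constructor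
    · rintro ⟨⟨hS, h1⟩, h2⟩
      exact ⟨hS, by simpa using h1, by simpa using h2⟩
    · rintro ⟨hS, h1, h2⟩
      exact ⟨⟨hS, by simpa using h1⟩, by simpa using h2⟩
  have hCft : ((Sset K m).toFinset.filter (fun w => ¬ t₁ w)).filter t₂
      = (C3s K m false true).toFinset := by
    ext w
    simp only [Finset.mem_filter, Set.mem_toFinset, C3s_char K m hm false true w, ht₁, ht₂]
    constructor
    · rintro ⟨⟨hS, h1⟩, h2⟩
      exact ⟨hS, by simpa using h1, by simpa using h2⟩
    · rintro ⟨hS, h1, h2⟩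
      exact ⟨⟨hS, by simpa using h1⟩, by simpa using h2⟩
  have hCff : ((Sset K m).toFinset.filter (fun w => ¬ t₁ w)).filter (fun w => ¬ t₂ w)
      = (C3s K m false false).toFinset := by
    ext w
    simp only [Finset.mem_filter, Set.mem_toFinset, C3s_char K m hm false false w, ht₁, ht₂]
    constructor
    · rintro ⟨⟨hS, h1⟩, h2⟩
      exact ⟨hS, by simpa using h1, by simpa using h2⟩
    · rintro ⟨hS, h1, h2⟩
      exact ⟨⟨hS, by simpa using h1⟩, by simpa using h2⟩
  -- constant sums
  have hsum_tt : ∑ w ∈ ((Sset K m).toFinset.filter t₁).filter t₂, f w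
      = (Ccal K 3 m).toFinset.card * (Fintype.card K - 1) ^ 2 := by
    rw [hCtt]
    rw [Finset.sum_congr rfl (fun w hw => ?_), Finset.sum_const, smul_eq_mul]
    have hw' := (Ccal_m_char K m hm w).1 (Set.mem_toFinset.1 hw)
    show (fib K m w).ncard = _
    rw [fib_card K m hm w hw'.1, if_pos hw'.2.1, if_pos hw'.2.2]
  have hsum_tf : ∑ w ∈ ((Sset K m).toFinset.filter t₁).filter (fun w => ¬ t₂ w), f w
      = (C3s K m true false).toFinset.card
          * (Fintype.card K * (Fintype.card K - 1)) := by
    rw [hCtf]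
    rw [Finset.sum_congr rfl (fun w hw => ?_), Finset.sum_const, smul_eq_mul]
    have hw' := (C3s_char K m hm true false w).1 (Set.mem_toFinset.1 hw)
    show (fib K m w).ncard = _
    rw [fib_card K m hm w hw'.1, if_pos (by simpa using hw'.2.1),
      if_neg (by simpa using hw'.2.2)]
  have hsum_ft : ∑ w ∈ ((Sset K m).toFinset.filter (fun w => ¬ t₁ w)).filter t₂, f w
      = (C3s K m false true).toFinset.card
          * (Fintype.card K * (Fintype.card K - 1)) := by
    rw [hCft]
    rw [Finset.sum_congr rfl (fun w hw => ?_), Finset.sum_const, smul_eq_mul]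
    have hw' := (C3s_char K m hm false true w).1 (Set.mem_toFinset.1 hw)
    show (fib K m w).ncard = _
    rw [fib_card K m hm w hw'.1, if_neg (by simpa using hw'.2.1),
      if_pos (by simpa using hw'.2.2)]
  have hsum_ff : ∑ w ∈ ((Sset K m).toFinset.filter (fun w => ¬ t₁ w)).filter (fun w => ¬ t₂ w),
        f w
      = (C3s K m false false).toFinset.card * Fintype.card K ^ 2 := by
    rw [hCff]
    rw [Finset.sum_congr rfl (fun w hw => ?_), Finset.sum_const, smul_eq_mul]
    have hw' := (C3s_char K m hm false false w).1 (Set.mem_toFinset.1 hw)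
    show (fib K m w).ncard = _
    rw [fib_card K m hm w hw'.1, if_neg (by simpa using hw'.2.1),
      if_neg (by simpa using hw'.2.2)]
  have hcard : ∀ s : Set (ZMod m → PT K), s.toFinset.card = Nat.card s := by
    intro s
    rw [Nat.card_coe_set_eq, Set.ncard_eq_toFinset_card']
  rw [← hsplit1, ← hsplit2, ← hsplit3, hsum_tt, hsum_tf, hsum_ft, hsum_ff,
    hcard, hcard, hcard, hcard]
  ring

end Counting

/-- for `n ≥ 4`,
`c_3(n) = (q-1)^2 c_3(n-1) + 2q(q-1) c_3^{+-}(n-1) + q^2 c_3^{--}(n-1)`. -/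
theorem card_C3_recursion
    (K : Type) [Field K] [Fintype K] (q : ℕ) (hq : Fintype.card K = q)
    (n : ℕ) (hn : 4 ≤ n) :
    Nat.card ↥(Ccal K 3 n)
      = (q - 1) ^ 2 * Nat.card ↥(Ccal K 3 (n - 1))
        + 2 * q * (q - 1) * Nat.card ↥(C3s K (n - 1) true false)
        + q ^ 2 * Nat.card ↥(C3s K (n - 1) false false) := by
  subst hq
  obtain ⟨m, rfl⟩ : ∃ m, n = m + 1 := ⟨n - 1, by omega⟩
  have hm : 3 ≤ m := by omega
  have h := card_step K m hm
  rw [card_C3s_swap K m hm] at h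
  rw [h, (by omega : m + 1 - 1 = m)]
  ring

end FriezeCount
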